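/- Let 0 < θ̄ < π/2 and l₀ > 0, and set κ₀ = 2 sin(θ̄)/l₀. Define the cone K = {x ∈ ℝ² : |x₂| ≤ x₁ · tan(θ̄)}, the region P₀ = {x ∈ ℝ² : ‖x‖ ≤ l₀} ∩ K, and the arc Q₀ = {x ∈ ℝ² : ‖x‖ = l₀} ∩ K. Let τ : ℝ → ℝ² be twice continuously differentiable on [0,1] with τ(0) = (0,0), τ'(0) = (1,0), ‖τ'(s)‖ = 1 for all s ∈ [0,1] (unit-speed parametrization), curvature bound ‖τ''(s)‖ ≤ κ₀ for all s ∈ [0,1], and τ(1) ∉ P₀. Then there exists s₀ ∈ [0,1] such that τ(s₀) ∈ Q₀ and τ(s) ∈ P₀ for all s ∈ [0, s₀]. -/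

import Mathlib

open Real Set

/-- The cone with apex at the origin, axis the positive `x`-axis
and half-aperture `θ`. -/
def irrCone (θ : ℝ) : Set (EuclideanSpace ℝ (Fin 2)) :=
  {x | |x 1| ≤ x 0 * Real.tan θ}

/-- The region `P₀`: the disk of radius `l₀` intersected with the cone. -/
def irrP (θ l₀ : ℝ) : Set (EuclideanSpace ℝ (Fin 2)) :=
  {x | ‖x‖ ≤ l₀} ∩ irrCone θ

/-- The arc `Q₀`: the circle of radius `l₀` intersected with the cone. -/
def irrQ (θ l₀ : ℝ) : Set (EuclideanSpace ℝ (Fin 2)) :=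
  {x | ‖x‖ = l₀} ∩ irrCone θ

set_option maxHeartbeats 1000000

open MeasureTheory

private lemma sin_ge_aux {a b : ℝ} (hb : -(π/2) ≤ b) (hba : b ≤ a) (hab : a ≤ π - b) :
    Real.sin b ≤ Real.sin a := by
  rcases le_or_gt a (π/2) with h | h
  · exact Real.strictMonoOn_sin.monotoneOn ⟨hb, hba.trans h⟩ ⟨hb.trans hba, h⟩ hba
  · rw [← Real.sin_pi_sub a]
    exact Real.strictMonoOn_sin.monotoneOn ⟨hb, by linarith⟩ ⟨by linarith, by linarith⟩
      (by linarith)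

private lemma mono_helper {f F : ℝ → ℝ} {a b : ℝ} (hab : a ≤ b)
    (hfc : ContinuousOn f (Icc a b)) (hFc : ContinuousOn F (Icc a b))
    (hd : ∀ s ∈ Ioo a b, ∃ d e : ℝ, HasDerivAt f d s ∧ HasDerivAt F e s ∧ e ≤ d) :
    ∀ s ∈ Icc a b, F s - F a ≤ f s - f a := by
  have hmono : MonotoneOn (fun s => f s - F s) (Icc a b) := by
    apply monotoneOn_of_deriv_nonneg (convex_Icc a b) (hfc.sub hFc)
    · intro s hs
      rw [interior_Icc] at hs
      obtain ⟨d, e, hf, hF, _⟩ := hd s hs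
      exact (hf.sub hF).differentiableAt.differentiableWithinAt
    · intro s hs
      rw [interior_Icc] at hs
      obtain ⟨d, e, hf, hF, hle⟩ := hd s hs
      rw [(hf.sub hF).deriv]
      linarith
  intro s hs
  have := hmono ⟨le_refl a, hab⟩ hs hs.1
  simp only at this
  linarith

private lemma enorm_two (x : EuclideanSpace ℝ (Fin 2)) :
    ‖x‖ = Real.sqrt ((x 0)^2 + (x 1)^2) := by
  rw [EuclideanSpace.norm_eq]
  simp [Fin.sum_univ_two, Real.norm_eq_abs, sq_abs]

private lemma sq_norm_two (x : EuclideanSpace ℝ (Fin 2)) :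
    (x 0)^2 + (x 1)^2 = ‖x‖^2 := by
  rw [enorm_two, Real.sq_sqrt (by positivity)]

private lemma cs_two (x0 x1 y0 y1 : ℝ) :
    x0*y0 + x1*y1 ≤ Real.sqrt (x0^2+x1^2) * Real.sqrt (y0^2+y1^2) := by
  rw [← Real.sqrt_mul (by positivity)]
  rcases le_or_gt (x0*y0 + x1*y1) 0 with h | h
  · exact h.trans (Real.sqrt_nonneg _)
  · have hsq : (x0*y0+x1*y1)^2 ≤ (x0^2+x1^2)*(y0^2+y1^2) := by nlinarith [sq_nonneg (x0*y1 - x1*y0)]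
    calc x0*y0 + x1*y1 = Real.sqrt ((x0*y0+x1*y1)^2) := (Real.sqrt_sq h.le).symm
      _ ≤ _ := Real.sqrt_le_sqrt hsq

private lemma abs_le_of_sq_le {c d : ℝ} (hd : 0 ≤ d) (h : c^2 ≤ d^2) : |c| ≤ d := by
  nlinarith [abs_nonneg c, sq_abs c, le_abs_self c, neg_abs_le c]


/-- Theorem (escape through the arc): any unit-speed C² curve starting at the
origin in direction `(1,0)`, with curvature bounded by `κ₀ = 2 sin θ̄ / l₀`,
which ends outside `P₀`, must cross the arc `Q₀`, staying in `P₀` until then. -/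
theorem curvature_constrained_path_leaves_through_arc
    (θ l₀ : ℝ) (hθ₀ : 0 < θ) (hθ₁ : θ < π / 2) (hl₀ : 0 < l₀)
    (τ : ℝ → EuclideanSpace ℝ (Fin 2))
    (hC2 : ContDiffOn ℝ 2 τ (Icc 0 1))
    (h0 : τ 0 = !₂[0, 0])
    (h0' : deriv τ 0 = !₂[1, 0])
    (hunit : ∀ s ∈ Icc (0:ℝ) 1, ‖deriv τ s‖ = 1)
    (hcurv : ∀ s ∈ Icc (0:ℝ) 1, ‖deriv (deriv τ) s‖ ≤ 2 * Real.sin θ / l₀)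
    (hend : τ 1 ∉ irrP θ l₀) :
    ∃ s₀ ∈ Icc (0:ℝ) 1, τ s₀ ∈ irrQ θ l₀ ∧ ∀ s ∈ Icc 0 s₀, τ s ∈ irrP θ l₀ := by
  have hπ := Real.pi_pos
  have hsθ : 0 < Real.sin θ := Real.sin_pos_of_pos_of_lt_pi hθ₀ (by linarith)
  have hcθ : 0 < Real.cos θ := Real.cos_pos_of_mem_Ioo ⟨by linarith, hθ₁⟩
  set κ : ℝ := 2 * Real.sin θ / l₀ with hκdef
  have hκ : 0 < κ := by positivity
  have hI : UniqueDiffOn ℝ (Icc (0:ℝ) 1) := uniqueDiffOn_Icc one_pos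
  -- differentiability of τ at points of Icc
  have hdiff : ∀ s ∈ Icc (0:ℝ) 1, DifferentiableAt ℝ τ s := by
    intro s hs
    by_contra h
    have := hunit s hs
    rw [deriv_zero_of_not_differentiableAt h] at this
    simp at this
  set T : ℝ → EuclideanSpace ℝ (Fin 2) := derivWithin τ (Icc 0 1) with hTdef
  have hTτ : ∀ s ∈ Icc (0:ℝ) 1, T s = deriv τ s := fun s hs =>
    (hdiff s hs).derivWithin (hI s hs)
  have hTcd : ContDiffOn ℝ 1 T (Icc 0 1) := hC2.derivWithin hI (by norm_num)
  have hTc : ContinuousOn T (Icc 0 1) := hTcd.continuousOn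
  have hTdOn : DifferentiableOn ℝ T (Icc 0 1) := hTcd.differentiableOn (by norm_num)
  set T' : ℝ → EuclideanSpace ℝ (Fin 2) := derivWithin T (Icc 0 1) with hT'def
  have hT'c : ContinuousOn T' (Icc 0 1) := hTcd.continuousOn_derivWithin hI (by norm_num)
  have hmemnhds : ∀ s ∈ Ioo (0:ℝ) 1, Icc (0:ℝ) 1 ∈ nhds s := fun s hs =>
    Icc_mem_nhds hs.1 hs.2
  have hTd : ∀ s ∈ Ioo (0:ℝ) 1, HasDerivAt T (T' s) s := by
    intro s hs
    have hda : DifferentiableAt ℝ T s :=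
      (hTdOn s (Ioo_subset_Icc_self hs)).differentiableAt (hmemnhds s hs)
    have := hda.hasDerivAt
    rwa [← derivWithin_of_mem_nhds (hmemnhds s hs)] at this
  have hT'κ : ∀ s ∈ Icc (0:ℝ) 1, ‖T' s‖ ≤ κ := by
    have hIoo : ∀ t ∈ Ioo (0:ℝ) 1, ‖T' t‖ ≤ κ := by
      intro t ht
      have heq : deriv τ =ᶠ[nhds t] T :=
        Filter.eventuallyEq_of_mem (hmemnhds t ht) (fun u hu => (hTτ u hu).symm)
      have h1 : deriv (deriv τ) t = deriv T t := heq.deriv_eq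
      have h2 : deriv T t = T' t := (derivWithin_of_mem_nhds (hmemnhds t ht)).symm
      have := hcurv t (Ioo_subset_Icc_self ht)
      rwa [h1, h2] at this
    intro s hs
    have hcl : s ∈ closure (Ioo (0:ℝ) 1) := by
      rw [closure_Ioo (by norm_num : (0:ℝ) ≠ 1)]; exact hs
    have hne : (nhdsWithin s (Ioo (0:ℝ) 1)).NeBot := mem_closure_iff_nhdsWithin_neBot.mp hcl
    have htend : Filter.Tendsto (fun t => ‖T' t‖) (nhdsWithin s (Ioo (0:ℝ) 1)) (nhds ‖T' s‖) :=
      ((hT'c s hs).mono Ioo_subset_Icc_self).norm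
    exact le_of_tendsto htend (eventually_mem_nhdsWithin.mono hIoo)
  have hT1 : ∀ s ∈ Icc (0:ℝ) 1, (T s 0)^2 + (T s 1)^2 = 1 := by
    intro s hs
    have h1 : ‖T s‖ = 1 := by rw [hTτ s hs]; exact hunit s hs
    rw [sq_norm_two, h1]; norm_num
  have hT00 : T 0 0 = 1 := by
    rw [hTτ 0 (by norm_num), h0']; rfl
  have hT01 : T 0 1 = 0 := by
    rw [hTτ 0 (by norm_num), h0']; rfl
  -- coordinate derivatives
  have hTco : ∀ s ∈ Ioo (0:ℝ) 1, ∀ i : Fin 2, HasDerivAt (fun t => T t i) (T' s i) s := by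
    intro s hs i
    have := (EuclideanSpace.proj i).hasFDerivAt.comp_hasDerivAt s (hTd s hs)
    exact this
  have hτd : ∀ s ∈ Icc (0:ℝ) 1, HasDerivAt τ (T s) s := by
    intro s hs
    rw [hTτ s hs]; exact (hdiff s hs).hasDerivAt
  have hxco : ∀ s ∈ Icc (0:ℝ) 1, ∀ i : Fin 2, HasDerivAt (fun t => τ t i) (T s i) s := by
    intro s hs i
    have := (EuclideanSpace.proj i).hasFDerivAt.comp_hasDerivAt s (hτd s hs)
    exact this
  have hTT' : ∀ s ∈ Ioo (0:ℝ) 1, T s 0 * T' s 0 + T s 1 * T' s 1 = 0 := by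
    intro s hs
    have hN : HasDerivAt (fun t => (T t 0)^2 + (T t 1)^2)
        (2 * T s 0 * T' s 0 + 2 * T s 1 * T' s 1) s := by
      have h0d := ((hTco s hs 0).pow 2)
      have h1d := ((hTco s hs 1).pow 2)
      have := h0d.add h1d
      convert this using 1
      · rfl
      · rfl
      · rfl
      · norm_num
    have hN0 : HasDerivAt (fun t => (T t 0)^2 + (T t 1)^2) 0 s := by
      have heq : (fun t => (T t 0)^2 + (T t 1)^2) =ᶠ[nhds s] (fun _ => 1) :=
        Filter.eventuallyEq_of_mem (hmemnhds s hs) (fun u hu => hT1 u hu)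
      exact (hasDerivAt_const s (1:ℝ)).congr_of_eventuallyEq heq
    have := hN.unique hN0
    linarith
  -- continuity of coordinates
  have hTcoc : ∀ i : Fin 2, ContinuousOn (fun t => T t i) (Icc 0 1) := by
    intro i
    exact (EuclideanSpace.proj i).continuous.comp_continuousOn hTc
  have hT'coc : ∀ i : Fin 2, ContinuousOn (fun t => T' t i) (Icc 0 1) := by
    intro i
    exact (EuclideanSpace.proj i).continuous.comp_continuousOn hT'c
  have hxcoc : ∀ i : Fin 2, ContinuousOn (fun t => τ t i) (Icc 0 1) := by
    intro i
    exact (EuclideanSpace.proj i).continuous.comp_continuousOn hC2.continuousOn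
  -- the turning speed
  set c : ℝ → ℝ := fun t => T t 0 * T' t 1 - T t 1 * T' t 0 with hcdef
  have hcc : ContinuousOn c (Icc 0 1) :=
    ((hTcoc 0).mul (hT'coc 1)).sub ((hTcoc 1).mul (hT'coc 0))
  have hcκ : ∀ s ∈ Icc (0:ℝ) 1, |c s| ≤ κ := by
    intro s hs
    have h1 : (c s)^2 ≤ κ^2 := by
      have hn := hT'κ s hs
      have h2 : (T' s 0)^2 + (T' s 1)^2 = ‖T' s‖^2 := sq_norm_two (T' s)
      have h3 := hT1 s hs
      have hn2 : ‖T' s‖^2 ≤ κ^2 := by nlinarith [norm_nonneg (T' s)]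
      have hid : (c s)^2 + (T s 0 * T' s 0 + T s 1 * T' s 1)^2
          = (T s 0^2 + T s 1^2) * (T' s 0^2 + T' s 1^2) := by
        simp only [hcdef]
        ring
      rw [h3, one_mul, h2] at hid
      nlinarith [sq_nonneg (T s 0 * T' s 0 + T s 1 * T' s 1)]
    exact abs_le_of_sq_le hκ.le h1
  have hcint : ∀ u v : ℝ, u ∈ Icc (0:ℝ) 1 → v ∈ Icc (0:ℝ) 1 →
      IntervalIntegrable c volume u v := by
    intro u v hu hv
    apply ContinuousOn.intervalIntegrable
    exact hcc.mono (Set.uIcc_subset_Icc hu hv)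
  set φ : ℝ → ℝ := fun s => ∫ t in (0:ℝ)..s, c t with hφdef
  have hφ0 : φ 0 = 0 := by simp [hφdef]
  have hφd : ∀ s ∈ Ioo (0:ℝ) 1, HasDerivAt φ (c s) s := by
    intro s hs
    apply intervalIntegral.integral_hasDerivAt_right
      (hcint 0 s (by norm_num) (Ioo_subset_Icc_self hs))
    · exact (hcc.mono Ioo_subset_Icc_self).stronglyMeasurableAtFilter isOpen_Ioo s hs
    · exact (hcc s (Ioo_subset_Icc_self hs)).continuousAt (hmemnhds s hs)
  have hφLip : ∀ u ∈ Icc (0:ℝ) 1, ∀ v ∈ Icc (0:ℝ) 1, |φ u - φ v| ≤ κ * |u - v| := by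
    intro u hu v hv
    have hsub : φ u - φ v = ∫ t in v..u, c t :=
      intervalIntegral.integral_interval_sub_left (hcint 0 u (by norm_num) hu)
        (hcint 0 v (by norm_num) hv)
    rw [hsub, ← Real.norm_eq_abs]
    apply intervalIntegral.norm_integral_le_of_norm_le_const
    intro x hx
    rw [Real.norm_eq_abs]
    apply hcκ
    have : Set.uIoc v u ⊆ Icc 0 1 := by
      rw [uIoc_eq_union]
      rintro y (hy | hy)
      · exact ⟨le_trans hv.1 hy.1.le, le_trans hy.2 hu.2⟩
      · exact ⟨le_trans hu.1 hy.1.le, le_trans hy.2 hv.2⟩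
    exact this hx
  have hφb : ∀ s ∈ Icc (0:ℝ) 1, |φ s| ≤ κ * s := by
    intro s hs
    have := hφLip s hs 0 (by norm_num)
    rw [hφ0] at this
    simpa [abs_of_nonneg hs.1] using this
  have hφc : ContinuousOn φ (Icc 0 1) := by
    apply LipschitzOnWith.continuousOn (K := κ.toNNReal)
    apply LipschitzOnWith.of_dist_le_mul
    intro x hx y hy
    rw [Real.dist_eq, Real.dist_eq]
    calc |φ x - φ y| ≤ κ * |x - y| := hφLip x hx y hy
      _ ≤ κ.toNNReal * |x - y| := by
          rw [Real.coe_toNNReal κ hκ.le]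

  -- the angle function representation
  set A : ℝ → ℝ := fun s => T s 0 * Real.cos (φ s) + T s 1 * Real.sin (φ s) with hAdef
  set B : ℝ → ℝ := fun s => T s 1 * Real.cos (φ s) - T s 0 * Real.sin (φ s) with hBdef
  have hAc : ContinuousOn A (Icc 0 1) :=
    ((hTcoc 0).mul (Real.continuous_cos.comp_continuousOn hφc)).add
      ((hTcoc 1).mul (Real.continuous_sin.comp_continuousOn hφc))
  have hBc : ContinuousOn B (Icc 0 1) :=
    ((hTcoc 1).mul (Real.continuous_cos.comp_continuousOn hφc)).sub
      ((hTcoc 0).mul (Real.continuous_sin.comp_continuousOn hφc))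
  have hBd : ∀ s ∈ Ioo (0:ℝ) 1, HasDerivAt B 0 s := by
    intro s hs
    have hcos : HasDerivAt (fun t => Real.cos (φ t)) (-Real.sin (φ s) * c s) s := (hφd s hs).cos
    have hsin : HasDerivAt (fun t => Real.sin (φ t)) (Real.cos (φ s) * c s) s := (hφd s hs).sin
    have hD : HasDerivAt B
        (T' s 1 * Real.cos (φ s) + T s 1 * (-Real.sin (φ s) * c s)
          - (T' s 0 * Real.sin (φ s) + T s 0 * (Real.cos (φ s) * c s))) s :=
      ((hTco s hs 1).mul hcos).sub ((hTco s hs 0).mul hsin)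
    convert hD using 1
    have hR1 := hT1 s (Ioo_subset_Icc_self hs)
    have hR2 := hTT' s hs
    simp only [hcdef]
    linear_combination (Real.cos (φ s) * T' s 1 - Real.sin (φ s) * T' s 0) * hR1 +
      (T s 0 * Real.sin (φ s) - T s 1 * Real.cos (φ s)) * hR2
  have hB0 : B 0 = 0 := by simp [hBdef, hφ0, hT00, hT01]
  have hA0 : A 0 = 1 := by simp [hAdef, hφ0, hT00, hT01]
  have hBzero : ∀ s ∈ Icc (0:ℝ) 1, B s = 0 := by
    intro s hs
    have h1 := mono_helper zero_le_one hBc (continuousOn_const (c := (0:ℝ)))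
      (fun t ht => ⟨0, 0, hBd t ht, hasDerivAt_const t 0, le_refl 0⟩) s hs
    have h2 := mono_helper zero_le_one (continuousOn_const (c := (0:ℝ))) hBc
      (fun t ht => ⟨0, 0, hasDerivAt_const t 0, hBd t ht, le_refl 0⟩) s hs
    simp only [hB0, sub_zero, sub_self] at h1 h2
    linarith
  have hAsq : ∀ s ∈ Icc (0:ℝ) 1, A s ^ 2 = 1 := by
    intro s hs
    have h1 := hT1 s hs
    have h2 := hBzero s hs
    have h3 := Real.sin_sq_add_cos_sq (φ s)
    simp only [hAdef, hBdef] at h2 ⊢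
    linear_combination (Real.sin (φ s)^2 + Real.cos (φ s)^2) * h1 + h3 -
      (T s 1 * Real.cos (φ s) - T s 0 * Real.sin (φ s) + 0) * h2
  have hA1 : ∀ s ∈ Icc (0:ℝ) 1, A s = 1 := by
    intro s hs
    by_contra hne
    have hAs : A s = -1 := by
      have h := hAsq s hs
      have : (A s - 1) * (A s + 1) = 0 := by linear_combination h
      rcases mul_eq_zero.mp this with h' | h'
      · exact absurd (by linarith : A s = 1) hne
      · linarith
    have hsub : Icc (0:ℝ) s ⊆ Icc 0 1 := Icc_subset_Icc (le_refl 0) hs.2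
    have hivt := intermediate_value_Icc' hs.1 (hAc.mono hsub)
    have h0mem : (0:ℝ) ∈ Icc (A s) (A 0) := by rw [hA0, hAs]; norm_num
    obtain ⟨v, hv, hAv⟩ := hivt h0mem
    have hsq := hAsq v (hsub hv)
    rw [hAv] at hsq
    norm_num at hsq
  have hTcos : ∀ s ∈ Icc (0:ℝ) 1, T s 0 = Real.cos (φ s) := by
    intro s hs
    have hA := hA1 s hs
    have hB := hBzero s hs
    have hpy := Real.sin_sq_add_cos_sq (φ s)
    simp only [hAdef, hBdef] at hA hB
    linear_combination Real.cos (φ s) * hA - Real.sin (φ s) * hB - T s 0 * hpy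
  have hTsin : ∀ s ∈ Icc (0:ℝ) 1, T s 1 = Real.sin (φ s) := by
    intro s hs
    have hA := hA1 s hs
    have hB := hBzero s hs
    have hpy := Real.sin_sq_add_cos_sq (φ s)
    simp only [hAdef, hBdef] at hA hB
    linear_combination Real.sin (φ s) * hA + Real.cos (φ s) * hB - T s 1 * hpy

  -- the escape time scale
  set sstar : ℝ := 2*θ/κ with hsstardef
  set S : ℝ := min 1 sstar with hSdef
  have hsstarpos : 0 < sstar := by positivity
  have hS0 : 0 < S := lt_min one_pos hsstarpos
  have hS1 : S ≤ 1 := min_le_left _ _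
  have hIccS : Icc (0:ℝ) S ⊆ Icc 0 1 := Icc_subset_Icc (le_refl 0) hS1
  have hIooS : Ioo (0:ℝ) S ⊆ Ioo 0 1 := Ioo_subset_Ioo (le_refl 0) hS1
  have hκsstar : κ * sstar = 2*θ := by
    rw [hsstardef, mul_comm, div_mul_cancel₀ _ hκ.ne']
  have hκS : ∀ s ∈ Icc (0:ℝ) S, κ * s ≤ 2*θ := by
    intro s hs
    have h1 : s ≤ sstar := le_trans hs.2 (min_le_right _ _)
    have h2 : κ * s ≤ κ * sstar := mul_le_mul_of_nonneg_left h1 hκ.le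
    rwa [hκsstar] at h2
  -- staying in the cone
  have hconeIneq : ∀ e : ℝ, e = 1 ∨ e = -1 → ∀ s ∈ Icc (0:ℝ) S,
      0 ≤ τ s 0 * Real.sin θ - e * (τ s 1 * Real.cos θ) := by
    intro e he
    set w : ℝ → ℝ := fun t => τ t 0 * Real.sin θ - e * (τ t 1 * Real.cos θ) with hwdef
    set Fw : ℝ → ℝ := fun t => (Real.cos (θ - κ*t) - Real.cos θ)/κ with hFwdef
    have hwc : ContinuousOn w (Icc 0 S) := (((hxcoc 0).mono hIccS).mul continuousOn_const).sub
      (continuousOn_const.mul (((hxcoc 1).mono hIccS).mul continuousOn_const))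
    have hFwc : ContinuousOn Fw (Icc 0 S) := by
      apply Continuous.continuousOn
      fun_prop
    have hd : ∀ s ∈ Ioo (0:ℝ) S, ∃ d d' : ℝ, HasDerivAt w d s ∧ HasDerivAt Fw d' s ∧ d' ≤ d := by
      intro s hs
      have hs1 : s ∈ Ioo (0:ℝ) 1 := hIooS hs
      have hsI : s ∈ Icc (0:ℝ) 1 := Ioo_subset_Icc_self hs1
      have hwd : HasDerivAt w (T s 0 * Real.sin θ - e * (T s 1 * Real.cos θ)) s :=
        ((hxco s hsI 0).mul_const _).sub (((hxco s hsI 1).mul_const _).const_mul e)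
      have hlin : HasDerivAt (fun t : ℝ => θ - κ*t) (-κ) s := by
        simpa using ((hasDerivAt_id s).const_mul κ).const_sub θ
      have heq : (-Real.sin (θ - κ*s) * -κ - 0)/κ = Real.sin (θ - κ*s) := by
        field_simp
        ring
      have hFd : HasDerivAt Fw (Real.sin (θ - κ*s)) s := by
        rw [← heq]
        exact ((hlin.cos).sub (hasDerivAt_const s _)).div_const κ
      refine ⟨_, _, hwd, hFd, ?_⟩
      have hφs := hφb s hsI
      have habs := abs_le.mp hφs
      have hκs2θ : κ * s ≤ 2*θ := hκS s (Ioo_subset_Icc_self hs)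
      have hκspos : 0 ≤ κ * s := mul_nonneg hκ.le hs.1.le
      have hw' : T s 0 * Real.sin θ - e * (T s 1 * Real.cos θ) = Real.sin (θ - e * φ s) := by
        rcases he with he | he <;> subst he <;>
          rw [hTcos s hsI, hTsin s hsI] <;>
          simp [Real.sin_sub, Real.sin_add, Real.cos_neg, Real.sin_neg] <;> ring_nf
      rw [hw']
      apply sin_ge_aux
      · linarith
      · rcases he with he | he <;> subst he <;> nlinarith [habs.1, habs.2]
      · rcases he with he | he <;> subst he <;> nlinarith [habs.1, habs.2]
    have hm := mono_helper hS0.le hwc hFwc hd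
    intro s hs
    have hms := hm s hs
    have hw0 : w 0 = 0 := by simp [hwdef, h0]
    have hFw0 : Fw 0 = 0 := by simp [hFwdef]
    have hFws : 0 ≤ Fw s := by
      have h1 : Real.cos θ ≤ Real.cos (θ - κ*s) := by
        rw [← Real.cos_abs (θ - κ*s)]
        apply Real.cos_le_cos_of_nonneg_of_le_pi (abs_nonneg _) (by linarith)
        rw [abs_le]
        have h2 := hκS s hs
        have h3 : 0 ≤ κ * s := mul_nonneg hκ.le hs.1
        constructor <;> linarith
      rw [hFwdef]
      exact div_nonneg (by linarith) hκ.le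
    rw [hw0, hFw0] at hms
    simp only [sub_zero] at hms
    have hws : 0 ≤ w s := by linarith
    simpa [hwdef] using hws
  have hcone : ∀ s ∈ Icc (0:ℝ) S, τ s ∈ irrCone θ := by
    intro s hs
    have h1 := hconeIneq 1 (Or.inl rfl) s hs
    have h2 := hconeIneq (-1) (Or.inr rfl) s hs
    show |τ s 1| ≤ τ s 0 * Real.tan θ
    have habs : |τ s 1| * Real.cos θ ≤ τ s 0 * Real.sin θ := by
      rcases abs_cases (τ s 1) with ⟨hh, _⟩ | ⟨hh, _⟩ <;> rw [hh] <;> nlinarith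
    rw [Real.tan_eq_sin_div_cos, ← mul_div_assoc]
    exact (le_div_iff₀ hcθ).mpr habs
  -- reaching the circle
  have hnormS : l₀ ≤ ‖τ S‖ := by
    rcases le_or_gt sstar 1 with hss | hss
    · -- chord estimate
      have hSs : S = sstar := min_eq_right hss
      set m : ℝ := S/2 with hmdef
      have hmI : m ∈ Icc (0:ℝ) 1 := ⟨by linarith, by linarith⟩
      have hκm : κ * m = θ := by
        rw [hmdef]
        rw [hSs]
        field_simp [hκsstar]
        exact hκsstar
      set u : ℝ → ℝ := fun t => τ t 0 * T m 0 + τ t 1 * T m 1 with hudef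
      set Fu : ℝ → ℝ := fun t => Real.sin (κ*(t - m))/κ with hFudef
      have huc : ContinuousOn u (Icc 0 S) := (((hxcoc 0).mono hIccS).mul continuousOn_const).add
        (((hxcoc 1).mono hIccS).mul continuousOn_const)
      have hFuc : ContinuousOn Fu (Icc 0 S) := by
        apply Continuous.continuousOn
        fun_prop
      have hd : ∀ s ∈ Ioo (0:ℝ) S, ∃ d d' : ℝ, HasDerivAt u d s ∧ HasDerivAt Fu d' s ∧ d' ≤ d := by
        intro s hs
        have hs1 : s ∈ Ioo (0:ℝ) 1 := hIooS hs
        have hsI : s ∈ Icc (0:ℝ) 1 := Ioo_subset_Icc_self hs1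
        have hud : HasDerivAt u (T s 0 * T m 0 + T s 1 * T m 1) s :=
          ((hxco s hsI 0).mul_const _).add ((hxco s hsI 1).mul_const _)
        have hlin : HasDerivAt (fun t : ℝ => κ*(t - m)) κ s := by
          simpa using ((hasDerivAt_id s).sub_const m).const_mul κ
        have heq : Real.cos (κ*(s - m)) * κ / κ = Real.cos (κ*(s - m)) := by
          field_simp
        have hFd : HasDerivAt Fu (Real.cos (κ*(s - m))) s := by
          rw [← heq]
          exact (hlin.sin).div_const κ
        refine ⟨_, _, hud, hFd, ?_⟩
        have hu' : T s 0 * T m 0 + T s 1 * T m 1 = Real.cos (φ s - φ m) := by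
          rw [hTcos s hsI, hTsin s hsI, hTcos m hmI, hTsin m hmI, Real.cos_sub]
        rw [hu']
        rw [← Real.cos_abs (φ s - φ m), ← Real.cos_abs (κ*(s - m))]
        apply Real.cos_le_cos_of_nonneg_of_le_pi (abs_nonneg _)
        · have h1 : |κ*(s - m)| = κ * |s - m| := by
            rw [abs_mul, abs_of_nonneg hκ.le]
          rw [h1]
          have h2 : |s - m| ≤ m := by
            rw [abs_le]
            constructor <;> [linarith [hs.1]; (rw [hmdef]; rw [hmdef] at *; linarith [hs.2])]
          nlinarith [hκ.le, hκm]
        · have h3 := hφLip s hsI m hmI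
          have h1 : |κ*(s - m)| = κ * |s - m| := by
            rw [abs_mul, abs_of_nonneg hκ.le]
          rw [h1]
          exact h3
      have hm2 := mono_helper hS0.le huc hFuc hd S ⟨hS0.le, le_refl S⟩
      have hu0 : u 0 = 0 := by simp [hudef, h0]
      have hFuS : Fu S - Fu 0 = 2 * Real.sin θ / κ := by
        rw [hFudef]
        simp only
        have e1 : κ * (S - m) = θ := by rw [hmdef] at *; rw [show S - S/2 = S/2 by ring]; exact hκm
        have e2 : κ * ((0:ℝ) - m) = -θ := by
          rw [show (0:ℝ) - m = -m by ring, mul_neg, hκm]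
        rw [e1, e2, Real.sin_neg]
        ring
      have hl₀eq : 2 * Real.sin θ / κ = l₀ := by
        rw [hκdef]
        field_simp
      have huS : l₀ ≤ u S := by
        rw [← hl₀eq, ← hFuS]
        rw [hu0] at hm2
        linarith
      -- Cauchy-Schwarz
      have hcs := cs_two (τ S 0) (τ S 1) (T m 0) (T m 1)
      have hTm1 : (T m 0)^2 + (T m 1)^2 = 1 := hT1 m hmI
      rw [hTm1, Real.sqrt_one, mul_one, ← enorm_two] at hcs
      calc l₀ ≤ u S := huS
        _ ≤ ‖τ S‖ := hcs
    · -- the curve ends outside the disk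
      have hS1' : S = 1 := min_eq_left hss.le
      have hconeat1 : τ 1 ∈ irrCone θ := by
        rw [← hS1']
        exact hcone S ⟨hS0.le, le_refl S⟩
      by_contra hcon
      push_neg at hcon
      apply hend
      rw [← hS1']
      exact ⟨le_of_lt hcon, by rw [hS1']; exact hconeat1⟩
  -- first hitting time of the circle
  set K : Set ℝ := {s | s ∈ Icc (0:ℝ) S ∧ l₀ ≤ ‖τ s‖} with hKdef
  have hKne : S ∈ K := ⟨⟨hS0.le, le_refl S⟩, hnormS⟩
  have hτnc : ContinuousOn (fun s => ‖τ s‖) (Icc 0 S) := (hC2.continuousOn.mono hIccS).norm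
  have hKbdd : BddBelow K := ⟨0, fun x hx => hx.1.1⟩
  have hKclosed : IsClosed K := by
    have hKeq : K = Icc 0 S ∩ (fun s => ‖τ s‖) ⁻¹' (Ici l₀) := by
      ext x
      simp [hKdef, mem_preimage, mem_Ici]
    rw [hKeq]
    exact hτnc.preimage_isClosed_of_isClosed isClosed_Icc isClosed_Ici
  set s₀ : ℝ := sInf K with hs₀def
  have hs₀K : s₀ ∈ K := hKclosed.csInf_mem ⟨S, hKne⟩ hKbdd
  have hτ0norm : ‖τ 0‖ = 0 := by
    rw [h0, enorm_two]
    norm_num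
  have hs₀pos : 0 < s₀ := by
    rcases lt_or_eq_of_le hs₀K.1.1 with h | h
    · exact h
    · exfalso
      have := hs₀K.2
      rw [← h, hτ0norm] at this
      linarith
  have hlt : ∀ s, 0 ≤ s → s < s₀ → ‖τ s‖ < l₀ := by
    intro s hsnn hss
    by_contra hc
    push_neg at hc
    have hsK : s ∈ K := ⟨⟨hsnn, le_trans hss.le hs₀K.1.2⟩, hc⟩
    have := csInf_le hKbdd hsK
    rw [← hs₀def] at this
    linarith
  have hs₀norm : ‖τ s₀‖ = l₀ := by
    refine le_antisymm ?_ hs₀K.2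
    have hne : (nhdsWithin s₀ (Ico 0 s₀)).NeBot := by
      apply mem_closure_iff_nhdsWithin_neBot.mp
      rw [closure_Ico hs₀pos.ne]
      exact ⟨hs₀pos.le, le_refl s₀⟩
    have hsubI : Ico 0 s₀ ⊆ Icc 0 S := fun t ht => ⟨ht.1, le_trans ht.2.le hs₀K.1.2⟩
    have htend : Filter.Tendsto (fun s => ‖τ s‖) (nhdsWithin s₀ (Ico 0 s₀)) (nhds ‖τ s₀‖) :=
      (hτnc s₀ hs₀K.1).mono hsubI
    exact le_of_tendsto htend (eventually_mem_nhdsWithin.mono (fun t ht => (hlt t ht.1 ht.2).le))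
  refine ⟨s₀, ⟨hs₀K.1.1, le_trans hs₀K.1.2 hS1⟩, ⟨hs₀norm, hcone s₀ hs₀K.1⟩, ?_⟩
  intro s hs
  have hsS : s ∈ Icc 0 S := ⟨hs.1, le_trans hs.2 hs₀K.1.2⟩
  refine ⟨?_, hcone s hsS⟩
  show ‖τ s‖ ≤ l₀
  rcases lt_or_eq_of_le hs.2 with h | h
  · exact (hlt s hs.1 h).le
  · rw [h, hs₀norm]
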